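/- Let $n \geq 1$, let $\lambda_1, \dots, \lambda_n \in \mathbb{C}$ be pairwise distinct, let $X = \mathrm{diag}(\lambda_1, \dots, \lambda_n)$, and let $Y$ be an $n \times n$ complex matrix with $\mathrm{rank}([X,Y] + \mathrm{id}) = 1$. Then there exists an invertible diagonal matrix $D$ such that $(D Y D^{-1})_{ij} = (\lambda_i - \lambda_j)^{-1}$ for all $i \neq j$. -/

import Mathlib

theorem offdiagonal_normalization_by_diagonal_conjugation
    {n : ℕ} (hn : 1 ≤ n) (l : Fin n → ℂ) (hl : Function.Injective l)
    (Y : Matrix (Fin n) (Fin n) ℂ)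
    (h : ((Matrix.diagonal l) * Y - Y * (Matrix.diagonal l) + 1).rank = 1) :
    ∃ d : Fin n → ℂ, (∀ i, d i ≠ 0) ∧
      ∀ i j, i ≠ j →
        ((Matrix.diagonal d) * Y * (Matrix.diagonal d)⁻¹) i j = (l i - l j)⁻¹ := by
  set M : Matrix (Fin n) (Fin n) ℂ :=
    (Matrix.diagonal l) * Y - Y * (Matrix.diagonal l) + 1 with hM
  -- entries of M
  have hMentry : ∀ i j, M i j = (l i - l j) * Y i j + if i = j then 1 else 0 := by
    intro i j
    simp [hM, Matrix.sub_apply, Matrix.add_apply, Matrix.diagonal_mul, Matrix.mul_diagonal,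
      Matrix.one_apply, sub_mul]
    ring
  have hMdiag : ∀ i, M i i = 1 := by intro i; simp [hMentry]
  -- rank one decomposition
  rw [Matrix.rank, ← Module.rank_eq_one_iff_finrank_eq_one, rank_eq_one_iff] at h
  obtain ⟨⟨v₀, hv₀mem⟩, hv₀ne, hv₀⟩ := h
  -- columns are multiples of v₀
  have hcol : ∀ j : Fin n, ∃ c : ℂ, ∀ i, M i j = c * v₀ i := by
    intro j
    have hmem : (fun i => M i j) ∈ LinearMap.range M.mulVecLin := by
      refine ⟨Pi.single j 1, ?_⟩
      simp [Matrix.mulVecLin_apply]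
      rfl
    obtain ⟨c, hc⟩ := hv₀ ⟨_, hmem⟩
    refine ⟨c, fun i => ?_⟩
    have := congrFun (congrArg Subtype.val hc) i
    simpa [mul_comm] using this.symm
  choose c hc using hcol
  have hcv : ∀ i, c i * v₀ i = 1 := fun i => by rw [← hc i i, hMdiag]
  have hcne : ∀ i, c i ≠ 0 := by
    intro i hzero
    have := hcv i; rw [hzero, zero_mul] at this; exact one_ne_zero this.symm
  refine ⟨c, hcne, fun i j hij => ?_⟩
  have hdiaginv : (Matrix.diagonal c)⁻¹ = Matrix.diagonal (fun i => (c i)⁻¹) :=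
    Matrix.inv_eq_right_inv (by
      rw [Matrix.diagonal_mul_diagonal]
      convert Matrix.diagonal_one using 2
      funext i
      exact mul_inv_cancel₀ (hcne i))
  rw [hdiaginv]
  have hYij : (l i - l j) * Y i j = c j * v₀ i := by
    have := hc j i
    rw [hMentry i j] at this
    simpa [hij] using this
  have hlij : l i - l j ≠ 0 := sub_ne_zero.mpr (fun e => hij (hl e))
  have hY : Y i j = c j * v₀ i * (l i - l j)⁻¹ := by
    field_simp at hYij ⊢
    linear_combination hYij
  simp only [Matrix.mul_diagonal, Matrix.diagonal_mul, hY]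
  rw [show c i * (c j * v₀ i * (l i - l j)⁻¹) * (c j)⁻¹
      = (c i * v₀ i) * (c j * (c j)⁻¹) * (l i - l j)⁻¹ by ring,
    hcv i, mul_inv_cancel₀ (hcne j), one_mul, one_mul]
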